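/- Closed form of the β component (fused uncertainty) of an M-fold NIG fusion: let (δₘ,γₘ,αₘ,βₘ) for m = 1,…,M (M ≥ 1) be real parameter tuples with γₘ > 0 for all m, let δ̄ = (∑ₘ γₘδₘ)/(∑ₘ γₘ), and let (δ,γ,α,β) be the left-iterated NIG summation NIG₁ ⊕ ⋯ ⊕ NIG_M. Then β = ∑ₘ βₘ + (1/2)∑ₘ γₘ(δₘ − δ̄)², i.e., the fused β is the sum of the modality-specific β's plus the confidence-weighted deviation of each modality's prediction from the fused prediction. -/

import Mathlib

structure NIG where
  δ : ℝ
  γ : ℝ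
  α : ℝ
  β : ℝ

noncomputable def nigAdd (p q : NIG) : NIG where
  δ := (p.γ * p.δ + q.γ * q.δ) / (p.γ + q.γ)
  γ := p.γ + q.γ
  α := p.α + q.α + 1 / 2
  β := p.β + q.β
      + (1 / 2) * p.γ * (p.δ - (p.γ * p.δ + q.γ * q.δ) / (p.γ + q.γ)) ^ 2
      + (1 / 2) * q.γ * (q.δ - (p.γ * p.δ + q.γ * q.δ) / (p.γ + q.γ)) ^ 2

noncomputable def nigFold : List NIG → NIG
  | [] => ⟨0, 1, 2, 1⟩
  | hd :: tl => tl.foldl nigAdd hd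

lemma nigFold_concat (l : List NIG) (h : l ≠ []) (q : NIG) :
    nigFold (l ++ [q]) = nigAdd (nigFold l) q := by
  rcases l with _ | ⟨hd, tl⟩
  · exact absurd rfl h
  · simp [nigFold, List.foldl_append]

lemma nigFold_spec (l : List NIG) (h : l ≠ []) (hγ : ∀ p ∈ l, 0 < p.γ) :
    (nigFold l).γ = (l.map NIG.γ).sum ∧
    (nigFold l).δ = (l.map fun p => p.γ * p.δ).sum / (l.map NIG.γ).sum ∧
    (nigFold l).β = (l.map NIG.β).sum
      + (1/2) * ((l.map fun p => p.γ * p.δ^2).sum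
         - (l.map fun p => p.γ * p.δ).sum ^ 2 / (l.map NIG.γ).sum) := by
  induction l using List.reverseRecOn with
  | nil => exact absurd rfl h
  | append_singleton l q ih =>
    rcases eq_or_ne l [] with rfl | hl
    · have hq : q.γ ≠ 0 := (hγ q (by simp)).ne'
      simp [nigFold]
      field_simp
      refine ⟨?_, ?_⟩ <;> simp
    · have hγl : ∀ p ∈ l, 0 < p.γ := fun p hp => hγ p (by simp [hp])
      obtain ⟨hG, hD, hB⟩ := ih hl hγl
      have hGpos : 0 < (l.map NIG.γ).sum := by
        apply List.sum_pos
        · intro x hx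
          obtain ⟨a, ha, rfl⟩ := List.mem_map.mp hx
          exact hγl a ha
        · simp [hl]
      have hqpos : 0 < q.γ := hγ q (by simp)
      have hG' : (l.map NIG.γ).sum + q.γ ≠ 0 := by positivity
      have hGne : (l.map NIG.γ).sum ≠ 0 := hGpos.ne'
      rw [nigFold_concat l hl q]
      simp only [nigAdd, hG, hD, hB, List.map_append, List.sum_append,
        List.map_cons, List.map_nil, List.sum_cons, List.sum_nil, add_zero]
      rw [mul_div_cancel₀ _ hGne]
      refine ⟨trivial, rfl, ?_⟩
      field_simp
      ring

theorem nigFold_beta (M : ℕ) (hM : 1 ≤ M) (p : Fin M → NIG)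
    (hγ : ∀ m, 0 < (p m).γ) :
    (nigFold (List.ofFn p)).β
      = (∑ m, (p m).β)
        + (1 / 2) * ∑ m, (p m).γ *
            ((p m).δ - (∑ k, (p k).γ * (p k).δ) / (∑ k, (p k).γ)) ^ 2 := by
  have hne : List.ofFn p ≠ [] := by
    simp only [ne_eq, List.ofFn_eq_nil_iff]; omega
  have hmem : ∀ x ∈ List.ofFn p, 0 < x.γ := by
    intro x hx
    obtain ⟨i, rfl⟩ := List.mem_ofFn.mp hx
    exact hγ i
  obtain ⟨hG, hD, hB⟩ := nigFold_spec (List.ofFn p) hne hmem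
  rw [hB]
  simp only [List.map_ofFn, List.sum_ofFn, Function.comp]
  set G := ∑ k, (p k).γ with hGdef
  set S := ∑ k, (p k).γ * (p k).δ with hSdef
  have hGpos : 0 < G := Finset.sum_pos (fun i _ => hγ i) (by
    simp [Finset.univ_nonempty_iff, ← Fin.pos_iff_nonempty]; omega)
  have hGne : G ≠ 0 := hGpos.ne'
  have key : ∑ m, (p m).γ * ((p m).δ - S / G) ^ 2
      = (∑ m, (p m).γ * (p m).δ ^ 2) - 2 * (S / G) * S + (S / G) ^ 2 * G := by
    have : ∀ m : Fin M, (p m).γ * ((p m).δ - S / G) ^ 2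
        = (p m).γ * (p m).δ ^ 2 - 2 * (S / G) * ((p m).γ * (p m).δ)
          + (S / G) ^ 2 * (p m).γ := fun m => by ring
    simp only [this, Finset.sum_add_distrib, Finset.sum_sub_distrib,
      ← Finset.mul_sum, ← hSdef, ← hGdef]
  rw [key]
  field_simp
  ring
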